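/- arXiv:0711.1691 — 5 statements merged into one kernel-verified Lean document; each statement's English description precedes it below -/
import Mathlib

section
/- Let c ≥ 1 and c' ≥ 1 be integers, and let m = (m_1,…,m_c) and m' = (m'_1,…,m'_{c'}) be sequences of positive real numbers. Then F(m ⋆ m') ≤ F(m)·F(m'). -/
open Finset

/-- `F(m) = (∏_{i=1}^c m_i)/c!` for a sequence given by `m : ℕ → ℝ` on indices `1,…,c`. -/
noncomputable def Fval (c : ℕ) (m : ℕ → ℝ) : ℝ :=
  (∏ i ∈ Finset.Icc 1 c, m i) / (Nat.factorial c)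

/-- Extend a sequence by the convention `m_0 = 0`. -/
def ext0 (m : ℕ → ℝ) : ℕ → ℝ := fun i => if i = 0 then 0 else m i

/-- The lower join `(m ⋆ m')_r = min{m_i + m'_j : i + j = r, 0 ≤ i ≤ c, 0 ≤ j ≤ c'}`,
with the convention `m_0 = m'_0 = 0`. -/
noncomputable def lowerJoin (c c' : ℕ) (m m' : ℕ → ℝ) : ℕ → ℝ := fun r =>
  sInf {x : ℝ | ∃ i j : ℕ, i + j = r ∧ i ≤ c ∧ j ≤ c' ∧ x = ext0 m i + ext0 m' j}

namespace LJAux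

/-- The set of candidate values for the lower join. -/
def S (c c' : ℕ) (m m' : ℕ → ℝ) (r : ℕ) : Set ℝ :=
  {x : ℝ | ∃ i j : ℕ, i + j = r ∧ i ≤ c ∧ j ≤ c' ∧ x = ext0 m i + ext0 m' j}

lemma lowerJoin_eq (c c' : ℕ) (m m' : ℕ → ℝ) (r : ℕ) :
    lowerJoin c c' m m' r = sInf (S c c' m m' r) := rfl

lemma ext0_nonneg {c : ℕ} {m : ℕ → ℝ} (hm : ∀ i, 1 ≤ i → i ≤ c → 0 < m i)
    {i : ℕ} (hi : i ≤ c) : 0 ≤ ext0 m i := by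
  unfold ext0
  split_ifs with h
  · exact le_refl 0
  · exact (hm i (by omega) hi).le

lemma S_lowerBound {c c' : ℕ} {m m' : ℕ → ℝ}
    (hm : ∀ i, 1 ≤ i → i ≤ c → 0 < m i) (hm' : ∀ j, 1 ≤ j → j ≤ c' → 0 < m' j)
    (r : ℕ) : ∀ x ∈ S c c' m m' r, (0:ℝ) ≤ x := by
  rintro x ⟨i, j, hij, hi, hj, rfl⟩
  exact add_nonneg (ext0_nonneg hm hi) (ext0_nonneg hm' hj)

lemma S_bddBelow {c c' : ℕ} {m m' : ℕ → ℝ}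
    (hm : ∀ i, 1 ≤ i → i ≤ c → 0 < m i) (hm' : ∀ j, 1 ≤ j → j ≤ c' → 0 < m' j)
    (r : ℕ) : BddBelow (S c c' m m' r) :=
  ⟨0, fun x hx => S_lowerBound hm hm' r x hx⟩

lemma S_nonempty {c c' r : ℕ} (m m' : ℕ → ℝ) (h : r ≤ c + c') :
    (S c c' m m' r).Nonempty := by
  refine ⟨ext0 m (min r c) + ext0 m' (r - min r c), min r c, r - min r c, ?_, ?_, ?_, rfl⟩
  · omega
  · omega
  · omega

lemma S_finite (c c' : ℕ) (m m' : ℕ → ℝ) (r : ℕ) : (S c c' m m' r).Finite := by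
  have : S c c' m m' r ⊆ (fun p : ℕ × ℕ => ext0 m p.1 + ext0 m' p.2) ''
      (Set.Iic c ×ˢ Set.Iic c') := by
    rintro x ⟨i, j, hij, hi, hj, rfl⟩
    exact ⟨(i, j), ⟨hi, hj⟩, rfl⟩
  exact Set.Finite.subset (((Set.finite_Iic c).prod (Set.finite_Iic c')).image _) this

lemma J_mem {c c' r : ℕ} (m m' : ℕ → ℝ) (h : r ≤ c + c') :
    lowerJoin c c' m m' r ∈ S c c' m m' r := by
  rw [lowerJoin_eq]
  exact (S_nonempty m m' h).csInf_mem (S_finite c c' m m' r)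

lemma J_le {c c' r : ℕ} {m m' : ℕ → ℝ}
    (hm : ∀ i, 1 ≤ i → i ≤ c → 0 < m i) (hm' : ∀ j, 1 ≤ j → j ≤ c' → 0 < m' j)
    {x : ℝ} (hx : x ∈ S c c' m m' r) : lowerJoin c c' m m' r ≤ x :=
  csInf_le (S_bddBelow hm hm' r) hx

lemma J_pos {c c' r : ℕ} {m m' : ℕ → ℝ}
    (hm : ∀ i, 1 ≤ i → i ≤ c → 0 < m i) (hm' : ∀ j, 1 ≤ j → j ≤ c' → 0 < m' j)
    (hr : 1 ≤ r) (h : r ≤ c + c') : 0 < lowerJoin c c' m m' r := by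
  obtain ⟨i, j, hij, hi, hj, hx⟩ := J_mem m m' (c := c) (c' := c') (r := r) h
  rw [hx]
  rcases Nat.eq_zero_or_pos i with hi0 | hi1
  · have hj1 : 1 ≤ j := by omega
    have hjne : j ≠ 0 := by omega
    have h2 : 0 < ext0 m' j := by
      simp only [ext0, if_neg hjne]; exact hm' j hj1 hj
    exact add_pos_of_nonneg_of_pos (ext0_nonneg hm hi) h2
  · have hine : i ≠ 0 := by omega
    have h1 : 0 < ext0 m i := by
      simp only [ext0, if_neg hine]; exact hm i hi1 hi
    exact add_pos_of_pos_of_nonneg h1 (ext0_nonneg hm' hj)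

/-- Monotonicity: shrinking the index range increases the min. -/
lemma J_mono_left {c c' r : ℕ} {m m' : ℕ → ℝ} (hc : 1 ≤ c)
    (hm : ∀ i, 1 ≤ i → i ≤ c → 0 < m i) (hm' : ∀ j, 1 ≤ j → j ≤ c' → 0 < m' j)
    (h : r ≤ (c - 1) + c') :
    lowerJoin c c' m m' r ≤ lowerJoin (c - 1) c' m m' r := by
  obtain ⟨i, j, hij, hi, hj, hx⟩ := J_mem m m' (c := c - 1) (c' := c') (r := r) h
  refine J_le hm hm' ⟨i, j, hij, by omega, hj, hx⟩

lemma J_mono_right {c c' r : ℕ} {m m' : ℕ → ℝ} (hc' : 1 ≤ c')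
    (hm : ∀ i, 1 ≤ i → i ≤ c → 0 < m i) (hm' : ∀ j, 1 ≤ j → j ≤ c' → 0 < m' j)
    (h : r ≤ c + (c' - 1)) :
    lowerJoin c c' m m' r ≤ lowerJoin c (c' - 1) m m' r := by
  obtain ⟨i, j, hij, hi, hj, hx⟩ := J_mem m m' (c := c) (c' := c' - 1) (r := r) h
  refine J_le hm hm' ⟨i, j, hij, hi, by omega, hx⟩

lemma J_top {c c' : ℕ} (m m' : ℕ → ℝ) (hc : 1 ≤ c) (hc' : 1 ≤ c') :
    lowerJoin c c' m m' (c + c') = m c + m' c' := by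
  rw [lowerJoin_eq]
  have hS : S c c' m m' (c + c') = {m c + m' c'} := by
    ext x
    constructor
    · rintro ⟨i, j, hij, hi, hj, rfl⟩
      have hij2 : i = c ∧ j = c' := by omega
      have h1 : c ≠ 0 := by omega
      have h2 : c' ≠ 0 := by omega
      simp [ext0, h1, h2, hij2.1, hij2.2]
    · rintro rfl
      have h1 : c ≠ 0 := by omega
      have h2 : c' ≠ 0 := by omega
      exact ⟨c, c', rfl, le_refl _, le_refl _, by simp [ext0, h1, h2]⟩
  rw [hS, csInf_singleton]

lemma J_left_zero {c' r : ℕ} (m m' : ℕ → ℝ) (hr : 1 ≤ r) (h : r ≤ c') :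
    lowerJoin 0 c' m m' r = m' r := by
  rw [lowerJoin_eq]
  have hS : S 0 c' m m' r = {m' r} := by
    ext x
    constructor
    · rintro ⟨i, j, hij, hi, hj, rfl⟩
      have hi0 : i = 0 := by omega
      have hjr : j = r := by omega
      have h1 : r ≠ 0 := by omega
      simp [ext0, h1, hi0, hjr]
    · rintro rfl
      have h1 : r ≠ 0 := by omega
      exact ⟨0, r, by omega, le_refl _, h, by simp [ext0, h1]⟩
  rw [hS, csInf_singleton]

lemma J_right_zero {c r : ℕ} (m m' : ℕ → ℝ) (hr : 1 ≤ r) (h : r ≤ c) :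
    lowerJoin c 0 m m' r = m r := by
  rw [lowerJoin_eq]
  have hS : S c 0 m m' r = {m r} := by
    ext x
    constructor
    · rintro ⟨i, j, hij, hi, hj, rfl⟩
      have hj0 : j = 0 := by omega
      have hir : i = r := by omega
      have h1 : r ≠ 0 := by omega
      simp [ext0, h1, hj0, hir]
    · rintro rfl
      have h1 : r ≠ 0 := by omega
      exact ⟨r, 0, by omega, h, le_refl _, by simp [ext0, h1]⟩
  rw [hS, csInf_singleton]

/-- Key inequality, proved by induction on `c + c'`. -/
lemma key : ∀ n c c' : ℕ, c + c' ≤ n → ∀ m m' : ℕ → ℝ,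
    (∀ i, 1 ≤ i → i ≤ c → 0 < m i) → (∀ j, 1 ≤ j → j ≤ c' → 0 < m' j) →
    ∏ r ∈ Icc 1 (c + c'), lowerJoin c c' m m' r ≤
      ((c + c').choose c : ℝ) * ((∏ i ∈ Icc 1 c, m i) * (∏ j ∈ Icc 1 c', m' j)) := by
  intro n
  induction n with
  | zero =>
    intro c c' h m m' hm hm'
    have hc : c = 0 := by omega
    have hc' : c' = 0 := by omega
    subst hc; subst hc'
    simp
  | succ N ih =>
    intro c c' h m m' hm hm'
    rcases Nat.eq_zero_or_pos c with hc0 | hc1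
    · subst hc0
      have : ∏ r ∈ Icc 1 (0 + c'), lowerJoin 0 c' m m' r = ∏ j ∈ Icc 1 c', m' j := by
        rw [Nat.zero_add]
        refine Finset.prod_congr rfl ?_
        intro r hr
        rw [Finset.mem_Icc] at hr
        exact J_left_zero m m' hr.1 hr.2
      rw [this]
      simp
    rcases Nat.eq_zero_or_pos c' with hc'0 | hc'1
    · subst hc'0
      have : ∏ r ∈ Icc 1 (c + 0), lowerJoin c 0 m m' r = ∏ i ∈ Icc 1 c, m i := by
        rw [Nat.add_zero]
        refine Finset.prod_congr rfl ?_
        intro r hr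
        rw [Finset.mem_Icc] at hr
        exact J_right_zero m m' hr.1 hr.2
      rw [this]
      simp
    -- main case: c ≥ 1, c' ≥ 1
    set k := c + c' - 1 with hk
    have hkc : c + c' = k + 1 := by omega
    have hm1 : ∀ i, 1 ≤ i → i ≤ c - 1 → 0 < m i := fun i h1 h2 => hm i h1 (by omega)
    have hm'1 : ∀ j, 1 ≤ j → j ≤ c' - 1 → 0 < m' j := fun j h1 h2 => hm' j h1 (by omega)
    -- split off top factor
    have hsplit : ∏ r ∈ Icc 1 (c + c'), lowerJoin c c' m m' r =
        (∏ r ∈ Icc 1 k, lowerJoin c c' m m' r) * (m c + m' c') := by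
      rw [hkc, Finset.prod_Icc_succ_top (by omega : 1 ≤ k + 1), ← hkc, J_top m m' hc1 hc'1]
    -- bound partial products
    have hP1 : ∏ r ∈ Icc 1 k, lowerJoin c c' m m' r ≤
        ∏ r ∈ Icc 1 ((c - 1) + c'), lowerJoin (c - 1) c' m m' r := by
      have hkeq : k = (c - 1) + c' := by omega
      rw [hkeq]
      refine Finset.prod_le_prod ?_ ?_
      · intro r hr
        rw [Finset.mem_Icc] at hr
        exact (J_pos hm hm' hr.1 (by omega)).le
      · intro r hr
        rw [Finset.mem_Icc] at hr
        exact J_mono_left hc1 hm hm' hr.2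
    have hP2 : ∏ r ∈ Icc 1 k, lowerJoin c c' m m' r ≤
        ∏ r ∈ Icc 1 (c + (c' - 1)), lowerJoin c (c' - 1) m m' r := by
      have hkeq : k = c + (c' - 1) := by omega
      rw [hkeq]
      refine Finset.prod_le_prod ?_ ?_
      · intro r hr
        rw [Finset.mem_Icc] at hr
        exact (J_pos hm hm' hr.1 (by omega)).le
      · intro r hr
        rw [Finset.mem_Icc] at hr
        exact J_mono_right hc'1 hm hm' hr.2
    have ih1 := ih (c - 1) c' (by omega) m m' hm1 hm'
    have ih2 := ih c (c' - 1) (by omega) m m' hm hm'1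
    have hmc : 0 < m c := hm c hc1 (le_refl _)
    have hmc' : 0 < m' c' := hm' c' hc'1 (le_refl _)
    have hprod1 : (∏ i ∈ Icc 1 (c - 1), m i) * m c = ∏ i ∈ Icc 1 c, m i := by
      have : c = (c - 1) + 1 := by omega
      rw [this, Finset.prod_Icc_succ_top (by omega : 1 ≤ (c - 1) + 1)]
      norm_num
    have hprod2 : (∏ j ∈ Icc 1 (c' - 1), m' j) * m' c' = ∏ j ∈ Icc 1 c', m' j := by
      have : c' = (c' - 1) + 1 := by omega
      rw [this, Finset.prod_Icc_succ_top (by omega : 1 ≤ (c' - 1) + 1)]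
      norm_num
    have hchoose : ((c + c').choose c : ℝ) = (k.choose (c - 1) : ℝ) + (k.choose c : ℝ) := by
      have h2 : c - 1 + 1 = c := by omega
      have hpascal : (k + 1).choose c = k.choose (c - 1) + k.choose c := by
        rw [← h2]; exact Nat.choose_succ_succ k (c - 1)
      rw [hkc, hpascal]
      push_cast
      ring
    have e1 : ((c - 1) + c') = k := by omega
    have e2 : (c + (c' - 1)) = k := by omega
    rw [e1] at ih1 hP1
    rw [e2] at ih2 hP2
    calc ∏ r ∈ Icc 1 (c + c'), lowerJoin c c' m m' r
        = (∏ r ∈ Icc 1 k, lowerJoin c c' m m' r) * m c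
          + (∏ r ∈ Icc 1 k, lowerJoin c c' m m' r) * m' c' := by rw [hsplit]; ring
      _ ≤ ((k.choose (c - 1) : ℝ) * ((∏ i ∈ Icc 1 (c - 1), m i) * (∏ j ∈ Icc 1 c', m' j))) * m c
          + ((k.choose c : ℝ) * ((∏ i ∈ Icc 1 c, m i) * (∏ j ∈ Icc 1 (c' - 1), m' j))) * m' c' := by
          gcongr
          · exact le_trans hP1 ih1
          · exact le_trans hP2 ih2
      _ = (k.choose (c - 1) : ℝ) * (((∏ i ∈ Icc 1 (c - 1), m i) * m c) * (∏ j ∈ Icc 1 c', m' j))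
          + (k.choose c : ℝ) * ((∏ i ∈ Icc 1 c, m i) * ((∏ j ∈ Icc 1 (c' - 1), m' j) * m' c')) := by
          ring
      _ = ((c + c').choose c : ℝ) * ((∏ i ∈ Icc 1 c, m i) * (∏ j ∈ Icc 1 c', m' j)) := by
          rw [hprod1, hprod2, hchoose]; ring

end LJAux

theorem lowerJoin_Fval_le (c c' : ℕ) (hc : 1 ≤ c) (hc' : 1 ≤ c') (m m' : ℕ → ℝ)
    (hm : ∀ i, 1 ≤ i → i ≤ c → 0 < m i) (hm' : ∀ j, 1 ≤ j → j ≤ c' → 0 < m' j) :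
    Fval (c + c') (lowerJoin c c' m m') ≤ Fval c m * Fval c' m' := by
  have key := LJAux.key (c + c') c c' (le_refl _) m m' hm hm'
  unfold Fval
  have hfact : ((c + c').choose c : ℝ) * (c.factorial : ℝ) * (c'.factorial : ℝ)
      = ((c + c').factorial : ℝ) := by
    have := Nat.choose_mul_factorial_mul_factorial (Nat.le_add_right c c')
    have h2 : c + c' - c = c' := by omega
    rw [h2] at this
    exact_mod_cast this
  have hf : (0:ℝ) < ((c + c').factorial : ℝ) := by positivity
  have hfc : (0:ℝ) < (c.factorial : ℝ) := by positivity
  have hfc' : (0:ℝ) < (c'.factorial : ℝ) := by positivity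
  rw [div_mul_div_comm, div_le_div_iff₀ hf (by positivity)]
  calc (∏ r ∈ Finset.Icc 1 (c + c'), lowerJoin c c' m m' r) * ((c.factorial : ℝ) * (c'.factorial : ℝ))
      ≤ (((c + c').choose c : ℝ) * ((∏ i ∈ Finset.Icc 1 c, m i) * (∏ j ∈ Finset.Icc 1 c', m' j)))
        * ((c.factorial : ℝ) * (c'.factorial : ℝ)) := by
        gcongr
    _ = ((∏ i ∈ Finset.Icc 1 c, m i) * (∏ j ∈ Finset.Icc 1 c', m' j)) * ((c + c').factorial : ℝ) := by
        rw [← hfact] <;> ring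
end

section
/- Let c ≥ 1 and c' ≥ 1 be integers, and let m = (m_1,…,m_c) and m' = (m'_1,…,m'_{c'}) be sequences of positive real numbers. Then F(m ⋆ m') = F(m)·F(m') if and only if there exists a real number a > 0 such that m_i = a·i for all 1 ≤ i ≤ c and m'_j = a·j for all 1 ≤ j ≤ c'. -/
open Finset

def splits (c c' r : ℕ) : Finset ℕ :=
  (Finset.range (r+1)).filter (fun i => i ≤ c ∧ r ≤ i + c')

lemma mem_splits {c c' r i : ℕ} : i ∈ splits c c' r ↔ i ≤ r ∧ i ≤ c ∧ r ≤ i + c' := by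
  simp [splits, Nat.lt_succ_iff, and_assoc]

lemma splits_nonempty {c c' r : ℕ} (h : r ≤ c + c') : (splits c c' r).Nonempty := by
  refine ⟨min r c, mem_splits.2 ⟨min_le_left _ _, min_le_right _ _, ?_⟩⟩
  rcases le_total r c with h1 | h1
  · simp [min_eq_left h1]
  · simp only [min_eq_right h1]; omega

lemma lowerJoin_eq_inf' {c c' r : ℕ} (m m' : ℕ → ℝ) (h : r ≤ c + c') :
    lowerJoin c c' m m' r =
      (splits c c' r).inf' (splits_nonempty h) (fun i => ext0 m i + ext0 m' (r - i)) := by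
  rw [Finset.inf'_eq_csInf_image, lowerJoin]
  congr 1
  ext x
  constructor
  · rintro ⟨i, j, hij, hi, hj, rfl⟩
    refine ⟨i, mem_splits.2 ⟨by omega, hi, by omega⟩, ?_⟩
    simp only
    congr 2
    omega
  · rintro ⟨i, hi, rfl⟩
    rw [Finset.mem_coe, mem_splits] at hi
    exact ⟨i, r - i, by omega, hi.2.1, by omega, rfl⟩

lemma lowerJoin_le {c c' r i j : ℕ} (m m' : ℕ → ℝ) (hij : i + j = r) (hi : i ≤ c)
    (hj : j ≤ c') : lowerJoin c c' m m' r ≤ ext0 m i + ext0 m' j := by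
  rw [lowerJoin_eq_inf' m m' (by omega)]
  have : i ∈ splits c c' r := mem_splits.2 ⟨by omega, hi, by omega⟩
  have := Finset.inf'_le (fun i => ext0 m i + ext0 m' (r - i)) this
  simpa only [show r - i = j by omega] using this

lemma lowerJoin_exists {c c' r : ℕ} (m m' : ℕ → ℝ) (h : r ≤ c + c') :
    ∃ i j : ℕ, i + j = r ∧ i ≤ c ∧ j ≤ c' ∧
      lowerJoin c c' m m' r = ext0 m i + ext0 m' j := by
  rw [lowerJoin_eq_inf' m m' h]
  obtain ⟨i, hi, heq⟩ := Finset.exists_mem_eq_inf' (splits_nonempty h)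
    (fun i => ext0 m i + ext0 m' (r - i))
  rw [mem_splits] at hi
  exact ⟨i, r - i, by omega, hi.2.1, by omega, heq⟩

lemma ext0_of_pos {m : ℕ → ℝ} {i : ℕ} (h : 1 ≤ i) : ext0 m i = m i := by
  simp only [ext0]; rw [if_neg]; omega

lemma ext0_nonneg {m : ℕ → ℝ} {c i : ℕ} (hm : ∀ i, 1 ≤ i → i ≤ c → 0 < m i) (hi : i ≤ c) :
    0 ≤ ext0 m i := by
  rcases Nat.eq_zero_or_pos i with h | h
  · simp [ext0, h]
  · rw [ext0_of_pos h]; exact (hm i h hi).le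

lemma lowerJoin_pos {c c' r : ℕ} {m m' : ℕ → ℝ}
    (hm : ∀ i, 1 ≤ i → i ≤ c → 0 < m i) (hm' : ∀ j, 1 ≤ j → j ≤ c' → 0 < m' j)
    (h1 : 1 ≤ r) (h2 : r ≤ c + c') : 0 < lowerJoin c c' m m' r := by
  obtain ⟨i, j, hij, hi, hj, heq⟩ := lowerJoin_exists m m' h2
  rw [heq]
  rcases Nat.eq_zero_or_pos i with h | h
  · have hj1 : 1 ≤ j := by omega
    rw [ext0_of_pos hj1]
    have := hm' j hj1 hj
    have := ext0_nonneg hm hi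
    linarith
  · rw [ext0_of_pos h]
    have := hm i h hi
    have := ext0_nonneg hm' hj
    linarith

lemma lowerJoin_right_zero {c r : ℕ} (m m' : ℕ → ℝ) (h1 : 1 ≤ r) (h : r ≤ c) :
    lowerJoin c 0 m m' r = m r := by
  rw [lowerJoin_eq_inf' m m' (by omega)]
  have hs : splits c 0 r = {r} := by
    ext i; rw [mem_splits]; simp; omega
  rw [Finset.inf'_eq_of_forall]
  intro b hb
  rw [hs, Finset.mem_singleton] at hb
  subst hb
  rw [ext0_of_pos h1]
  simp [ext0]

lemma lowerJoin_left_zero {c' r : ℕ} (m m' : ℕ → ℝ) (h1 : 1 ≤ r) (h : r ≤ c') :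
    lowerJoin 0 c' m m' r = m' r := by
  rw [lowerJoin_eq_inf' m m' (by omega)]
  have hs : splits 0 c' r = {0} := by
    ext i; rw [mem_splits]; simp; omega
  rw [Finset.inf'_eq_of_forall]
  intro b hb
  rw [hs, Finset.mem_singleton] at hb
  subst hb
  rw [ext0_of_pos (show 1 ≤ r - 0 by omega)]
  simp [ext0]

lemma lowerJoin_top {c c' : ℕ} (m m' : ℕ → ℝ) (hc : 1 ≤ c) (hc' : 1 ≤ c') :
    lowerJoin c c' m m' (c + c') = m c + m' c' := by
  rw [lowerJoin_eq_inf' m m' le_rfl]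
  have hs : splits c c' (c + c') = {c} := by
    ext i; rw [mem_splits]; simp; omega
  rw [Finset.inf'_eq_of_forall]
  intro b hb
  rw [hs, Finset.mem_singleton] at hb
  rw [hb, ext0_of_pos hc, ext0_of_pos (show 1 ≤ c + c' - c by omega),
    show c + c' - c = c' by omega]

lemma lowerJoin_min {c c' r : ℕ} (m m' : ℕ → ℝ) (hc : 1 ≤ c) (hc' : 1 ≤ c')
    (hr : r < c + c') :
    lowerJoin c c' m m' r =
      min (lowerJoin (c-1) c' m m' r) (lowerJoin c (c'-1) m m' r) := by
  have h1 : r ≤ (c - 1) + c' := by omega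
  have h2 : r ≤ c + (c' - 1) := by omega
  apply le_antisymm
  · apply le_min
    · obtain ⟨i, j, hij, hi, hj, heq⟩ := lowerJoin_exists (c := c-1) m m' h1
      rw [heq]
      exact lowerJoin_le m m' hij (by omega) hj
    · obtain ⟨i, j, hij, hi, hj, heq⟩ := lowerJoin_exists (c' := c'-1) m m' h2
      rw [heq]
      exact lowerJoin_le m m' hij hi (by omega)
  · obtain ⟨i, j, hij, hi, hj, heq⟩ := lowerJoin_exists m m' (le_of_lt hr)
    rw [heq]
    rcases (show i ≤ c - 1 ∨ j ≤ c' - 1 by omega) with h | h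
    · exact le_trans (min_le_left _ _) (lowerJoin_le m m' hij h hj)
    · exact le_trans (min_le_right _ _) (lowerJoin_le m m' hij hi h)

lemma pi_le : ∀ n c c' (m m' : ℕ → ℝ), c + c' = n →
    (∀ i, 1 ≤ i → i ≤ c → 0 < m i) → (∀ j, 1 ≤ j → j ≤ c' → 0 < m' j) →
    ∏ r ∈ Icc 1 (c + c'), lowerJoin c c' m m' r ≤
      ((c + c').choose c : ℝ) * ((∏ i ∈ Icc 1 c, m i) * (∏ j ∈ Icc 1 c', m' j)) := by
  intro n
  induction n using Nat.strong_induction_on with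
  | _ n ih =>
    intro c c' m m' hn hm hm'
    rcases Nat.eq_zero_or_pos c with hc0 | hc1
    · subst hc0
      have heq : ∏ r ∈ Icc 1 (0 + c'), lowerJoin 0 c' m m' r = ∏ j ∈ Icc 1 c', m' j := by
        rw [zero_add]
        refine Finset.prod_congr rfl fun r hr => ?_
        rw [Finset.mem_Icc] at hr
        exact lowerJoin_left_zero m m' hr.1 hr.2
      rw [heq]
      simp
    rcases Nat.eq_zero_or_pos c' with hc0' | hc1'
    · subst hc0'
      have heq : ∏ r ∈ Icc 1 (c + 0), lowerJoin c 0 m m' r = ∏ i ∈ Icc 1 c, m i := by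
        rw [add_zero]
        refine Finset.prod_congr rfl fun r hr => ?_
        rw [Finset.mem_Icc] at hr
        exact lowerJoin_right_zero m m' hr.1 hr.2
      rw [heq]
      simp [Nat.choose_self]
    -- main case
    obtain ⟨k, hk⟩ : ∃ k, c + c' = k + 1 := ⟨c + c' - 1, by omega⟩
    set Q := ∏ r ∈ Icc 1 k, lowerJoin c c' m m' r with hQ
    set PA := ∏ r ∈ Icc 1 k, lowerJoin (c-1) c' m m' r with hPA
    set PB := ∏ r ∈ Icc 1 k, lowerJoin c (c'-1) m m' r with hPB
    have hQA : Q ≤ PA := by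
      refine Finset.prod_le_prod (fun r hr => ?_) (fun r hr => ?_)
      · rw [Finset.mem_Icc] at hr
        exact (lowerJoin_pos hm hm' hr.1 (by omega)).le
      · rw [Finset.mem_Icc] at hr
        rw [lowerJoin_min m m' hc1 hc1' (by omega)]
        exact min_le_left _ _
    have hQB : Q ≤ PB := by
      refine Finset.prod_le_prod (fun r hr => ?_) (fun r hr => ?_)
      · rw [Finset.mem_Icc] at hr
        exact (lowerJoin_pos hm hm' hr.1 (by omega)).le
      · rw [Finset.mem_Icc] at hr
        rw [lowerJoin_min m m' hc1 hc1' (by omega)]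
        exact min_le_right _ _
    have hmA : ∀ i, 1 ≤ i → i ≤ c - 1 → 0 < m i := fun i h1 h2 => hm i h1 (by omega)
    have hmB : ∀ j, 1 ≤ j → j ≤ c' - 1 → 0 < m' j := fun j h1 h2 => hm' j h1 (by omega)
    have hA := ih k (by omega) (c-1) c' m m' (by omega) hmA hm'
    have hB := ih k (by omega) c (c'-1) m m' (by omega) hm hmB
    rw [show (c-1) + c' = k by omega] at hA
    rw [show c + (c'-1) = k by omega] at hB
    rw [← hPA] at hA
    rw [← hPB] at hB
    have hmc : 0 < m c := hm c hc1 le_rfl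
    have hm'c : 0 < m' c' := hm' c' hc1' le_rfl
    have hPm : ∏ i ∈ Icc 1 c, m i = (∏ i ∈ Icc 1 (c-1), m i) * m c := by
      rw [show c = (c-1) + 1 by omega, Finset.prod_Icc_succ_top (by omega)]
      rw [show c - 1 + 1 - 1 = c - 1 by omega]
    have hPm' : ∏ j ∈ Icc 1 c', m' j = (∏ j ∈ Icc 1 (c'-1), m' j) * m' c' := by
      rw [show c' = (c'-1) + 1 by omega, Finset.prod_Icc_succ_top (by omega)]
      rw [show c' - 1 + 1 - 1 = c' - 1 by omega]
    have hC : (((k+1)).choose c : ℝ) = (k.choose (c-1) : ℝ) + (k.choose c : ℝ) := by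
      rw [show c = (c-1)+1 by omega, Nat.choose_succ_succ]
      push_cast
      rw [Nat.succ_eq_add_one, show c - 1 + 1 = c by omega]
    have hQpos : 0 ≤ Q := by
      refine Finset.prod_nonneg fun r hr => ?_
      rw [Finset.mem_Icc] at hr
      exact (lowerJoin_pos hm hm' hr.1 (by omega)).le
    have htop : lowerJoin c c' m m' (k+1) = m c + m' c' := by
      rw [← hk]; exact lowerJoin_top m m' hc1 hc1'
    rw [hk, Finset.prod_Icc_succ_top (by omega), ← hQ, htop, hC, hPm, hPm']
    have h1 : m c * PA ≤ m c * ((k.choose (c-1) : ℝ) *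
        ((∏ i ∈ Icc 1 (c-1), m i) * ∏ j ∈ Icc 1 c', m' j)) :=
      mul_le_mul_of_nonneg_left hA hmc.le
    have h2 : m' c' * PB ≤ m' c' * ((k.choose c : ℝ) *
        ((∏ i ∈ Icc 1 c, m i) * ∏ j ∈ Icc 1 (c'-1), m' j)) :=
      mul_le_mul_of_nonneg_left hB hm'c.le
    rw [hPm] at h2
    have h3 : m c * Q ≤ m c * PA := mul_le_mul_of_nonneg_left hQA hmc.le
    have h4 : m' c' * Q ≤ m' c' * PB := mul_le_mul_of_nonneg_left hQB hm'c.le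
    rw [hPm'] at h1
    linarith [h1, h2, h3, h4]

lemma prod_eq_pointwise {s : Finset ℕ} {f g : ℕ → ℝ} (hpos : ∀ r ∈ s, 0 < f r)
    (hle : ∀ r ∈ s, f r ≤ g r) (heq : ∏ r ∈ s, f r = ∏ r ∈ s, g r) :
    ∀ r ∈ s, f r = g r := by
  intro r hr
  by_contra hne
  have hlt : f r < g r := lt_of_le_of_ne (hle r hr) hne
  exact absurd heq (ne_of_lt (Finset.prod_lt_prod hpos hle ⟨r, hr, hlt⟩))

lemma pi_eq : ∀ n c c' (m m' : ℕ → ℝ), c + c' = n → 1 ≤ c → 1 ≤ c' →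
    (∀ i, 1 ≤ i → i ≤ c → 0 < m i) → (∀ j, 1 ≤ j → j ≤ c' → 0 < m' j) →
    (∏ r ∈ Icc 1 (c + c'), lowerJoin c c' m m' r =
      ((c + c').choose c : ℝ) * ((∏ i ∈ Icc 1 c, m i) * (∏ j ∈ Icc 1 c', m' j))) →
    ∃ a : ℝ, 0 < a ∧ (∀ i, 1 ≤ i → i ≤ c → m i = a * i) ∧
      (∀ j, 1 ≤ j → j ≤ c' → m' j = a * j) := by
  intro n
  induction n using Nat.strong_induction_on with
  | _ n ih =>
    intro c c' m m' hn hc1 hc1' hm hm' heq0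
    obtain ⟨k, hk⟩ : ∃ k, c + c' = k + 1 := ⟨c + c' - 1, by omega⟩
    have hk1 : 1 ≤ k := by omega
    set Q := ∏ r ∈ Icc 1 k, lowerJoin c c' m m' r with hQ
    set PA := ∏ r ∈ Icc 1 k, lowerJoin (c-1) c' m m' r with hPA
    set PB := ∏ r ∈ Icc 1 k, lowerJoin c (c'-1) m m' r with hPB
    have hLpos : ∀ r ∈ Icc 1 k, 0 < lowerJoin c c' m m' r := by
      intro r hr; rw [Finset.mem_Icc] at hr
      exact lowerJoin_pos hm hm' hr.1 (by omega)
    have hLA : ∀ r ∈ Icc 1 k,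
        lowerJoin c c' m m' r ≤ lowerJoin (c-1) c' m m' r := by
      intro r hr; rw [Finset.mem_Icc] at hr
      rw [lowerJoin_min m m' hc1 hc1' (by omega)]
      exact min_le_left _ _
    have hLB : ∀ r ∈ Icc 1 k,
        lowerJoin c c' m m' r ≤ lowerJoin c (c'-1) m m' r := by
      intro r hr; rw [Finset.mem_Icc] at hr
      rw [lowerJoin_min m m' hc1 hc1' (by omega)]
      exact min_le_right _ _
    have hQA : Q ≤ PA := Finset.prod_le_prod (fun r hr => (hLpos r hr).le) hLA
    have hQB : Q ≤ PB := Finset.prod_le_prod (fun r hr => (hLpos r hr).le) hLB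
    have hmA : ∀ i, 1 ≤ i → i ≤ c - 1 → 0 < m i := fun i h1 h2 => hm i h1 (by omega)
    have hmB : ∀ j, 1 ≤ j → j ≤ c' - 1 → 0 < m' j := fun j h1 h2 => hm' j h1 (by omega)
    have hA := pi_le k (c-1) c' m m' (by omega) hmA hm'
    have hB := pi_le k c (c'-1) m m' (by omega) hm hmB
    rw [show (c-1) + c' = k by omega] at hA
    rw [show c + (c'-1) = k by omega] at hB
    rw [← hPA] at hA
    rw [← hPB] at hB
    have hmc : 0 < m c := hm c hc1 le_rfl
    have hm'c : 0 < m' c' := hm' c' hc1' le_rfl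
    have hPm : ∏ i ∈ Icc 1 c, m i = (∏ i ∈ Icc 1 (c-1), m i) * m c := by
      rw [show c = (c-1) + 1 by omega, Finset.prod_Icc_succ_top (by omega)]
      rw [show c - 1 + 1 - 1 = c - 1 by omega]
    have hPm' : ∏ j ∈ Icc 1 c', m' j = (∏ j ∈ Icc 1 (c'-1), m' j) * m' c' := by
      rw [show c' = (c'-1) + 1 by omega, Finset.prod_Icc_succ_top (by omega)]
      rw [show c' - 1 + 1 - 1 = c' - 1 by omega]
    have hC : (((k+1)).choose c : ℝ) = (k.choose (c-1) : ℝ) + (k.choose c : ℝ) := by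
      rw [show c = (c-1)+1 by omega, Nat.choose_succ_succ]
      push_cast
      rw [Nat.succ_eq_add_one, show c - 1 + 1 = c by omega]
    have htop : lowerJoin c c' m m' (k+1) = m c + m' c' := by
      rw [← hk]; exact lowerJoin_top m m' hc1 hc1'
    rw [hk, Finset.prod_Icc_succ_top (by omega), ← hQ, htop, hC, hPm, hPm'] at heq0
    set RA := (k.choose (c-1) : ℝ) * ((∏ i ∈ Icc 1 (c-1), m i) * ∏ j ∈ Icc 1 c', m' j)
      with hRA
    set RB := (k.choose c : ℝ) * ((∏ i ∈ Icc 1 c, m i) * ∏ j ∈ Icc 1 (c'-1), m' j)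
      with hRB
    -- heq0 : Q * (m c + m' c') = (CA + CB) * (PmA * m c * (Pm'B * m' c'))
    have e0 : m c * Q + m' c' * Q = m c * RA + m' c' * RB := by
      rw [hRA, hRB, hPm, hPm']
      ring_nf
      ring_nf at heq0
      linarith [heq0]
    have h1 : m c * PA ≤ m c * RA := mul_le_mul_of_nonneg_left hA hmc.le
    have h2 : m' c' * PB ≤ m' c' * RB := mul_le_mul_of_nonneg_left hB hm'c.le
    have h3 : m c * Q ≤ m c * PA := mul_le_mul_of_nonneg_left hQA hmc.le
    have h4 : m' c' * Q ≤ m' c' * PB := mul_le_mul_of_nonneg_left hQB hm'c.le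
    have eQA : Q = PA := le_antisymm hQA (le_of_mul_le_mul_left (by linarith) hmc)
    have eQB : Q = PB := le_antisymm hQB (le_of_mul_le_mul_left (by linarith) hm'c)
    have eAR : PA = RA := le_antisymm hA (le_of_mul_le_mul_left (by linarith) hmc)
    have eBR : PB = RB := le_antisymm hB (le_of_mul_le_mul_left (by linarith) hm'c)
    have hptA := prod_eq_pointwise hLpos hLA eQA
    have hptB := prod_eq_pointwise hLpos hLB eQB
    have hAB : ∀ r ∈ Icc 1 k, lowerJoin (c-1) c' m m' r = lowerJoin c (c'-1) m m' r := by
      intro r hr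
      rw [← hptA r hr, hptB r hr]
    have hkmem : k ∈ Icc 1 k := Finset.mem_Icc.2 ⟨hk1, le_rfl⟩
    have hABk := hAB k hkmem
    have hcast : ∀ d : ℕ, 1 ≤ d → ((d - 1 : ℕ) : ℝ) = (d : ℝ) - 1 := by
      intro d hd
      have := Nat.cast_sub (R := ℝ) hd
      simpa using this
    by_cases hc2 : 2 ≤ c
    · -- use IH on (c-1, c')
      have eA' : ∏ r ∈ Icc 1 ((c-1) + c'), lowerJoin (c-1) c' m m' r =
          ((((c-1) + c').choose (c-1)) : ℝ) *
            ((∏ i ∈ Icc 1 (c-1), m i) * ∏ j ∈ Icc 1 c', m' j) := by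
        rw [show (c-1) + c' = k by omega, ← hPA, ← hRA]
        exact eAR
      obtain ⟨a, ha, hl1, hl2⟩ := ih k (by omega) (c-1) c' m m'
        (by omega) (by omega) hc1' hmA hm' eA'
      have htopA : lowerJoin (c-1) c' m m' k = m (c-1) + m' c' := by
        rw [show k = (c-1) + c' by omega]
        exact lowerJoin_top m m' (by omega) hc1'
      have e1 := hl1 (c-1) (by omega) le_rfl
      have e2 := hl2 c' hc1' le_rfl
      have hcc := hcast c hc1
      have hmcval : m c = a * c := by
        by_cases h2' : 2 ≤ c'
        · have htopB : lowerJoin c (c'-1) m m' k = m c + m' (c'-1) := by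
            rw [show k = c + (c'-1) by omega]
            exact lowerJoin_top m m' hc1 (by omega)
          have e3 := hl2 (c'-1) (by omega) (by omega)
          rw [htopA, htopB, e1, e2, e3] at hABk
          rw [hcc, hcast c' hc1'] at hABk
          linarith [hABk]
        · have hc'1 : c' = 1 := by omega
          have htopB : lowerJoin c (c'-1) m m' k = m c := by
            rw [show c' - 1 = 0 by omega, show k = c by omega]
            exact lowerJoin_right_zero m m' (by omega) le_rfl
          rw [htopA, htopB, e1, e2] at hABk
          rw [hcc, hc'1] at hABk
          push_cast at hABk ⊢
          linarith [hABk]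
      refine ⟨a, ha, fun i h1 h2 => ?_, hl2⟩
      rcases Nat.lt_or_ge i c with h | h
      · exact hl1 i h1 (by omega)
      · rw [show i = c by omega]
        exact hmcval
    by_cases hc2' : 2 ≤ c'
    · -- c = 1, use IH on (c, c'-1)
      have hc1e : c = 1 := by omega
      have eB' : ∏ r ∈ Icc 1 (c + (c'-1)), lowerJoin c (c'-1) m m' r =
          (((c + (c'-1)).choose c) : ℝ) *
            ((∏ i ∈ Icc 1 c, m i) * ∏ j ∈ Icc 1 (c'-1), m' j) := by
        rw [show c + (c'-1) = k by omega, ← hPB, ← hRB]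
        exact eBR
      obtain ⟨a, ha, hl1, hl2⟩ := ih k (by omega) c (c'-1) m m'
        (by omega) hc1 (by omega) hm hmB eB'
      have htopA : lowerJoin (c-1) c' m m' k = m' c' := by
        rw [show c - 1 = 0 by omega, show k = c' by omega]
        exact lowerJoin_left_zero m m' (by omega) le_rfl
      have htopB : lowerJoin c (c'-1) m m' k = m c + m' (c'-1) := by
        rw [show k = c + (c'-1) by omega]
        exact lowerJoin_top m m' hc1 (by omega)
      have e1 := hl1 c hc1 le_rfl
      have e3 := hl2 (c'-1) (by omega) le_rfl
      rw [htopA, htopB, e1, e3] at hABk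
      rw [hcast c' hc1'] at hABk
      have hm'cval : m' c' = a * c' := by
        rw [hc1e] at hABk
        push_cast at hABk
        linarith [hABk]
      refine ⟨a, ha, hl1, fun j h1 h2 => ?_⟩
      rcases Nat.lt_or_ge j c' with h | h
      · exact hl2 j h1 (by omega)
      · rw [show j = c' by omega]
        exact hm'cval
    · -- c = c' = 1
      have hc1e : c = 1 := by omega
      have hc'1e : c' = 1 := by omega
      have hA1 : lowerJoin (c-1) c' m m' k = m' 1 := by
        rw [show c - 1 = 0 by omega, show k = 1 by omega, ← hc'1e]
        rw [hc'1e]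
        exact lowerJoin_left_zero m m' le_rfl le_rfl
      have hB1 : lowerJoin c (c'-1) m m' k = m 1 := by
        rw [show c' - 1 = 0 by omega, show k = 1 by omega, hc1e]
        exact lowerJoin_right_zero m m' le_rfl le_rfl
      rw [hA1, hB1] at hABk
      refine ⟨m 1, hm 1 le_rfl hc1, fun i h1 h2 => ?_, fun j h1 h2 => ?_⟩
      · rw [show i = 1 by omega]
        simp
      · rw [show j = 1 by omega, ← hABk]
        simp

lemma ext0_linear {m : ℕ → ℝ} {a : ℝ} {c i : ℕ} (hl : ∀ i, 1 ≤ i → i ≤ c → m i = a * i)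
    (hi : i ≤ c) : ext0 m i = a * i := by
  rcases Nat.eq_zero_or_pos i with h | h
  · simp [ext0, h]
  · rw [ext0_of_pos h]; exact hl i h hi

lemma lowerJoin_linear {c c' r : ℕ} {m m' : ℕ → ℝ} {a : ℝ}
    (hl : ∀ i, 1 ≤ i → i ≤ c → m i = a * i) (hl' : ∀ j, 1 ≤ j → j ≤ c' → m' j = a * j)
    (h2 : r ≤ c + c') : lowerJoin c c' m m' r = a * r := by
  rw [lowerJoin_eq_inf' m m' h2]
  apply Finset.inf'_eq_of_forall
  intro b hb
  rw [mem_splits] at hb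
  rw [ext0_linear hl hb.2.1, ext0_linear hl' (by omega : r - b ≤ c')]
  have : ((r - b : ℕ) : ℝ) = (r : ℝ) - b := by
    have := Nat.cast_sub (R := ℝ) hb.1
    simpa using this
  rw [this]
  ring

lemma prod_linear {c : ℕ} {m : ℕ → ℝ} {a : ℝ} (hl : ∀ i, 1 ≤ i → i ≤ c → m i = a * i) :
    ∏ i ∈ Icc 1 c, m i = a ^ c * (c.factorial : ℝ) := by
  have h1 : ∏ i ∈ Icc 1 c, m i = ∏ i ∈ Icc 1 c, (a * (i : ℝ)) := by
    refine Finset.prod_congr rfl fun i hi => ?_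
    rw [Finset.mem_Icc] at hi
    exact hl i hi.1 hi.2
  rw [h1, Finset.prod_mul_distrib, Finset.prod_const, Nat.card_Icc,
    show c + 1 - 1 = c by omega, ← Nat.cast_prod, ← Finset.Ico_add_one_right_eq_Icc, Finset.prod_Ico_id_eq_factorial]

theorem lowerJoin_Fval_eq_iff (c c' : ℕ) (hc : 1 ≤ c) (hc' : 1 ≤ c') (m m' : ℕ → ℝ)
    (hm : ∀ i, 1 ≤ i → i ≤ c → 0 < m i) (hm' : ∀ j, 1 ≤ j → j ≤ c' → 0 < m' j) :
    Fval (c + c') (lowerJoin c c' m m') = Fval c m * Fval c' m' ↔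
      ∃ a : ℝ, 0 < a ∧ (∀ i, 1 ≤ i → i ≤ c → m i = a * i) ∧
        (∀ j, 1 ≤ j → j ≤ c' → m' j = a * j) := by
  have hcf : (0:ℝ) < (c.factorial : ℝ) := by exact_mod_cast c.factorial_pos
  have hc'f : (0:ℝ) < (c'.factorial : ℝ) := by exact_mod_cast c'.factorial_pos
  have hNf : (0:ℝ) < ((c + c').factorial : ℝ) := by exact_mod_cast (c + c').factorial_pos
  have hfact : ((c + c').choose c : ℝ) * (c.factorial : ℝ) * (c'.factorial : ℝ)
      = ((c + c').factorial : ℝ) := by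
    have := Nat.choose_mul_factorial_mul_factorial (show c ≤ c + c' by omega)
    rw [show c + c' - c = c' by omega] at this
    exact_mod_cast this
  constructor
  · intro h
    rw [Fval, Fval, Fval] at h
    have hPi : ∏ r ∈ Icc 1 (c + c'), lowerJoin c c' m m' r =
        ((c + c').choose c : ℝ) * ((∏ i ∈ Icc 1 c, m i) * ∏ j ∈ Icc 1 c', m' j) := by
      rw [div_eq_iff (ne_of_gt hNf)] at h
      rw [h, ← hfact]
      field_simp
    exact pi_eq (c + c') c c' m m' rfl hc hc' hm hm' hPi
  · rintro ⟨a, ha, hl, hl'⟩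
    have hL : ∏ r ∈ Icc 1 (c + c'), lowerJoin c c' m m' r
        = a ^ (c + c') * ((c + c').factorial : ℝ) := by
      have : ∀ r, 1 ≤ r → r ≤ c + c' → lowerJoin c c' m m' r = a * r :=
        fun r _ h2 => lowerJoin_linear hl hl' h2
      exact prod_linear this
    rw [Fval, Fval, Fval, hL, prod_linear hl, prod_linear hl']
    field_simp
    ring
end

section
/- Let K and K' be simplicial complexes on disjoint finite vertex sets. If K satisfies the Taylor upper bound and K' satisfies the Taylor upper bound, then the join K ⋆ K' satisfies the Taylor upper bound. -/
open Finset

/-- A simplicial complex on a finite vertex set: a collection of finite subsets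
(faces) of the vertex set, closed under inclusion, containing every singleton. -/
structure SC (α : Type*) [DecidableEq α] where
  verts : Finset α
  faces : Finset (Finset α)
  subset_verts : ∀ F ∈ faces, F ⊆ verts
  down_closed : ∀ F ∈ faces, ∀ G, G ⊆ F → G ∈ faces
  singleton_mem : ∀ v ∈ verts, {v} ∈ faces

namespace SC

variable {α : Type*} [DecidableEq α]

/-- `dimP1 K = dim K + 1`: the maximal number of vertices of a face. -/
def dimP1 (K : SC α) : ℕ := K.faces.sup Finset.card

/-- The number of faces with exactly `j` vertices, i.e. `f_{j-1}(K)`. -/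
def fCard (K : SC α) (j : ℕ) : ℕ := (K.faces.filter (fun F => F.card = j)).card

/-- The minimal non-faces of `K`: subsets of the vertex set which are not faces,
all of whose proper subsets are faces. -/
def minNonFaces (K : SC α) : Finset (Finset α) :=
  K.verts.powerset.filter (fun F => F ∉ K.faces ∧ ∀ G ∈ F.powerset, G ≠ F → G ∈ K.faces)

/-- The `i`-th minimal Taylor shift `m̃_i(K)`: the minimal number of vertices covered by
a set of exactly `i` minimal non-faces of `K`. -/
noncomputable def mT (K : SC α) (i : ℕ) : ℕ :=
  sInf {n | ∃ T ⊆ K.minNonFaces, T.card = i ∧ (T.sup id).card = n}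

/-- The `i`-th maximal Taylor shift `M̃_i(K)`: the maximal number of vertices covered by
a set of exactly `i` minimal non-faces of `K`. -/
noncomputable def MT (K : SC α) (i : ℕ) : ℕ :=
  sSup {n | ∃ T ⊆ K.minNonFaces, T.card = i ∧ (T.sup id).card = n}

/-- The conjectured Taylor upper bound `(∏_{i=1}^{n-d} M̃_i(K))/(n-d)!` on `f_{d-1}(K)`. -/
noncomputable def taylorUBval (K : SC α) : ℚ :=
  (∏ i ∈ Finset.Icc 1 (K.verts.card - K.dimP1), (K.MT i : ℚ)) /
    (Nat.factorial (K.verts.card - K.dimP1))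

/-- The conjectured Taylor lower bound `(∏_{i=1}^{n-d} m̃_i(K))/(n-d)!` on `f_{d-1}(K)`. -/
noncomputable def taylorLBval (K : SC α) : ℚ :=
  (∏ i ∈ Finset.Icc 1 (K.verts.card - K.dimP1), (K.mT i : ℚ)) /
    (Nat.factorial (K.verts.card - K.dimP1))

/-- `K` satisfies the Taylor upper bound: `f_{d-1}(K) ≤ (∏_{i=1}^{n-d} M̃_i(K))/(n-d)!`. -/
def TaylorUB (K : SC α) : Prop := (K.fCard K.dimP1 : ℚ) ≤ K.taylorUBval

/-- `K` satisfies the Taylor lower bound: `f_{d-1}(K) ≥ (∏_{i=1}^{n-d} m̃_i(K))/(n-d)!`. -/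
def TaylorLB (K : SC α) : Prop := K.taylorLBval ≤ (K.fCard K.dimP1 : ℚ)

/-- The induced subcomplex `K[W]`: the faces of `K` contained in `W`. -/
def induced (K : SC α) (W : Finset α) : SC α where
  verts := K.verts ∩ W
  faces := K.faces.filter (fun F => F ⊆ W)
  subset_verts := by
    intro F hF
    simp only [mem_filter] at hF
    exact subset_inter (K.subset_verts F hF.1) hF.2
  down_closed := by
    intro F hF G hG
    simp only [mem_filter] at hF ⊢
    exact ⟨K.down_closed F hF.1 G hG, hG.trans hF.2⟩
  singleton_mem := by
    intro v hv
    simp only [mem_inter] at hv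
    simp only [mem_filter, singleton_subset_iff]
    exact ⟨K.singleton_mem v hv.1, hv.2⟩

end SC

namespace SC
variable {α : Type*} [DecidableEq α]

lemma empty_mem_faces (K : SC α) (h : K.faces.Nonempty) : ∅ ∈ K.faces := by
  obtain ⟨F, hF⟩ := h
  exact K.down_closed F hF ∅ (empty_subset F)

lemma dimP1_le_card (K : SC α) : K.dimP1 ≤ K.verts.card :=
  Finset.sup_le fun F hF => card_le_card (K.subset_verts F hF)

lemma fCard_dimP1_pos (K : SC α) (h : K.faces.Nonempty) : 0 < K.fCard K.dimP1 := by
  obtain ⟨F, hF, hc⟩ := Finset.exists_mem_eq_sup _ h Finset.card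
  exact card_pos.mpr ⟨F, mem_filter.mpr ⟨hF, hc.symm⟩⟩

lemma mnf_subset_verts (K : SC α) {N : Finset α} (h : N ∈ K.minNonFaces) : N ⊆ K.verts := by
  simp only [minNonFaces, mem_filter, mem_powerset] at h
  exact h.1

lemma mnf_not_face (K : SC α) {N : Finset α} (h : N ∈ K.minNonFaces) : N ∉ K.faces := by
  simp only [minNonFaces, mem_filter] at h
  exact h.2.1

lemma mnf_nonempty (K : SC α) (hne : K.faces.Nonempty) {N : Finset α}
    (h : N ∈ K.minNonFaces) : N.Nonempty := by
  rcases N.eq_empty_or_nonempty with rfl | hN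
  · exact absurd (K.empty_mem_faces hne) (K.mnf_not_face h)
  · exact hN

lemma MT_bddAbove (K : SC α) (i : ℕ) :
    BddAbove {n | ∃ T ⊆ K.minNonFaces, T.card = i ∧ (T.sup id).card = n} := by
  refine ⟨K.verts.card, ?_⟩
  rintro n ⟨T, hT, hcard, rfl⟩
  exact card_le_card (Finset.sup_le fun N hN => K.mnf_subset_verts (hT hN))

lemma MT_mem (K : SC α) (i : ℕ)
    (h : {n | ∃ T ⊆ K.minNonFaces, T.card = i ∧ (T.sup id).card = n}.Nonempty) :
    ∃ T ⊆ K.minNonFaces, T.card = i ∧ (T.sup id).card = K.MT i := by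
  have := Nat.sSup_mem h (K.MT_bddAbove i)
  exact this

lemma MT_zero (K : SC α) : K.MT 0 = 0 := by
  have : {n | ∃ T ⊆ K.minNonFaces, T.card = 0 ∧ (T.sup id).card = n} = {0} := by
    ext n
    simp only [Set.mem_setOf_eq, Set.mem_singleton_iff]
    constructor
    · rintro ⟨T, hT, hc, rfl⟩
      rw [card_eq_zero] at hc
      subst hc
      simp
    · rintro rfl
      exact ⟨∅, by simp⟩
  rw [MT, this, csSup_singleton]

lemma MT_nonempty_of_ne_zero (K : SC α) {i : ℕ} (h : K.MT i ≠ 0) :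
    {n | ∃ T ⊆ K.minNonFaces, T.card = i ∧ (T.sup id).card = n}.Nonempty := by
  by_contra hc
  rw [Set.not_nonempty_iff_eq_empty] at hc
  rw [MT, hc] at h
  simp at h

end SC

section Join
open SC
variable {α : Type*} [DecidableEq α] (K K' J : SC α)
  (hdisj : Disjoint K.verts K'.verts)
  (hV : J.verts = K.verts ∪ K'.verts)
  (hF : J.faces = (K.faces ×ˢ K'.faces).image (fun p => p.1 ∪ p.2))

include hdisj in
lemma join_face_disj {F G : Finset α} (h1 : F ∈ K.faces) (h2 : G ∈ K'.faces) :
    Disjoint F G :=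
  hdisj.mono (K.subset_verts F h1) (K'.subset_verts G h2)

include hdisj hF

omit hdisj in
lemma join_mem_faces {H : Finset α} :
    H ∈ J.faces ↔ ∃ F ∈ K.faces, ∃ G ∈ K'.faces, F ∪ G = H := by
  rw [hF]
  simp [mem_image, mem_product]
  constructor
  · rintro ⟨F, G, ⟨h1, h2⟩, rfl⟩
    exact ⟨F, h1, G, h2, rfl⟩
  · rintro ⟨F, h1, G, h2, rfl⟩
    exact ⟨F, G, ⟨h1, h2⟩, rfl⟩

lemma join_dimP1 (hne : K.faces.Nonempty) (hne' : K'.faces.Nonempty) :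
    J.dimP1 = K.dimP1 + K'.dimP1 := by
  apply le_antisymm
  · apply Finset.sup_le
    intro H hH
    rw [join_mem_faces K K' J hF] at hH
    obtain ⟨F, h1, G, h2, rfl⟩ := hH
    exact (card_union_le F G).trans (add_le_add (le_sup h1) (le_sup h2))
  · obtain ⟨F, hF1, hcF⟩ := Finset.exists_mem_eq_sup _ hne Finset.card
    obtain ⟨G, hG1, hcG⟩ := Finset.exists_mem_eq_sup _ hne' Finset.card
    have hmem : F ∪ G ∈ J.faces := (join_mem_faces K K' J hF).mpr ⟨F, hF1, G, hG1, rfl⟩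
    have : (F ∪ G).card = K.dimP1 + K'.dimP1 := by
      rw [card_union_of_disjoint (join_face_disj K K' hdisj hF1 hG1), ← hcF, ← hcG]
      rfl
    calc K.dimP1 + K'.dimP1 = (F ∪ G).card := this.symm
      _ ≤ J.dimP1 := le_sup hmem

lemma join_fCard (hne : K.faces.Nonempty) (hne' : K'.faces.Nonempty) :
    J.fCard J.dimP1 = K.fCard K.dimP1 * K'.fCard K'.dimP1 := by
  have hd := join_dimP1 K K' J hdisj hF hne hne'
  rw [fCard, fCard, fCard, hd]
  have hset : J.faces.filter (fun H => H.card = K.dimP1 + K'.dimP1) =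
      ((K.faces.filter (fun F => F.card = K.dimP1)) ×ˢ
        (K'.faces.filter (fun G => G.card = K'.dimP1))).image (fun p => p.1 ∪ p.2) := by
    ext H
    simp only [mem_filter, mem_image, mem_product, Prod.exists]
    constructor
    · rintro ⟨hH, hcard⟩
      rw [join_mem_faces K K' J hF] at hH
      obtain ⟨F, h1, G, h2, rfl⟩ := hH
      have hdFG := join_face_disj K K' hdisj h1 h2
      have hu : F.card + G.card = K.dimP1 + K'.dimP1 := by
        rw [← card_union_of_disjoint hdFG, hcard]
      have hF2 : F.card ≤ K.dimP1 := le_sup h1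
      have hG2 : G.card ≤ K'.dimP1 := le_sup h2
      exact ⟨F, G, ⟨⟨h1, by omega⟩, ⟨h2, by omega⟩⟩, rfl⟩
    · rintro ⟨F, G, ⟨⟨h1, hc1⟩, ⟨h2, hc2⟩⟩, rfl⟩
      refine ⟨(join_mem_faces K K' J hF).mpr ⟨F, h1, G, h2, rfl⟩, ?_⟩
      rw [card_union_of_disjoint (join_face_disj K K' hdisj h1 h2), hc1, hc2]
  rw [hset, card_image_of_injOn, card_product]
  rintro ⟨F, G⟩ h1 ⟨F', G'⟩ h2 heq
  simp only [Set.mem_prod, mem_coe, mem_product, mem_filter] at h1 h2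
  simp only at heq
  have key : ∀ A B : Finset α, A ∈ K.faces → B ∈ K'.faces → (A ∪ B) ∩ K.verts = A := by
    intro A B hA hB
    apply subset_antisymm
    · intro x hx
      rcases mem_inter.mp hx with ⟨hx1, hx2⟩
      rcases mem_union.mp hx1 with h | h
      · exact h
      · exact absurd hx2 (disjoint_right.mp hdisj (K'.subset_verts B hB h))
    · intro x hx
      exact mem_inter.mpr ⟨mem_union_left _ hx, K.subset_verts A hA hx⟩
  have key' : ∀ A B : Finset α, A ∈ K.faces → B ∈ K'.faces → (A ∪ B) ∩ K'.verts = B := by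
    intro A B hA hB
    apply subset_antisymm
    · intro x hx
      rcases mem_inter.mp hx with ⟨hx1, hx2⟩
      rcases mem_union.mp hx1 with h | h
      · exact absurd hx2 (disjoint_left.mp hdisj (K.subset_verts A hA h))
      · exact h
    · intro x hx
      exact mem_inter.mpr ⟨mem_union_right _ hx, K'.subset_verts B hB hx⟩
  have e1 : F = F' := by
    rw [← key F G h1.1.1 h1.2.1, ← key F' G' h2.1.1 h2.2.1, heq]
  have e2 : G = G' := by
    rw [← key' F G h1.1.1 h1.2.1, ← key' F' G' h2.1.1 h2.2.1, heq]
  simp [e1, e2]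

include hV in
lemma join_mnf_left (hne' : K'.faces.Nonempty) : K.minNonFaces ⊆ J.minNonFaces := by
  intro N hN
  have hNv := K.mnf_subset_verts hN
  simp only [minNonFaces, mem_filter, mem_powerset] at hN ⊢
  refine ⟨hV ▸ hNv.trans subset_union_left, ?_, ?_⟩
  · intro hNJ
    rw [join_mem_faces K K' J hF] at hNJ
    obtain ⟨F, h1, G, h2, heq⟩ := hNJ
    have hG : G = ∅ := by
      have hGK : G ⊆ K.verts := by
        refine Finset.Subset.trans ?_ hNv
        rw [← heq]
        exact subset_union_right
      have := hdisj.symm.mono_left (K'.subset_verts G h2)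
      exact eq_empty_of_forall_notMem fun x hx => disjoint_left.mp this hx (hGK hx)
    rw [hG, union_empty] at heq
    exact hN.2.1 (heq ▸ h1)
  · intro G hG hGN
    have := hN.2.2 G hG hGN
    rw [join_mem_faces K K' J hF]
    exact ⟨G, this, ∅, K'.empty_mem_faces hne', union_empty G⟩

include hV in
lemma join_mnf_right (hne : K.faces.Nonempty) : K'.minNonFaces ⊆ J.minNonFaces := by
  intro N hN
  have hNv := K'.mnf_subset_verts hN
  simp only [minNonFaces, mem_filter, mem_powerset] at hN ⊢
  refine ⟨hV ▸ hNv.trans subset_union_right, ?_, ?_⟩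
  · intro hNJ
    rw [join_mem_faces K K' J hF] at hNJ
    obtain ⟨F, h1, G, h2, heq⟩ := hNJ
    have hG : F = ∅ := by
      have hGK : F ⊆ K'.verts := by
        refine Finset.Subset.trans ?_ hNv
        rw [← heq]
        exact subset_union_left
      have := hdisj.mono_left (K.subset_verts F h1)
      exact eq_empty_of_forall_notMem fun x hx => disjoint_left.mp this hx (hGK hx)
    rw [hG, empty_union] at heq
    exact hN.2.1 (heq ▸ h2)
  · intro G hG hGN
    have := hN.2.2 G hG hGN
    rw [join_mem_faces K K' J hF]
    exact ⟨∅, K.empty_mem_faces hne, G, this, empty_union G⟩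

include hV in
lemma join_MT_step (hne : K.faces.Nonempty) (hne' : K'.faces.Nonempty) (j k : ℕ)
    (hj : {n | ∃ T ⊆ K.minNonFaces, T.card = j ∧ (T.sup id).card = n}.Nonempty)
    (hk : {n | ∃ T ⊆ K'.minNonFaces, T.card = k ∧ (T.sup id).card = n}.Nonempty) :
    K.MT j + K'.MT k ≤ J.MT (j + k) := by
  obtain ⟨T₁, hT₁, hc₁, hs₁⟩ := K.MT_mem j hj
  obtain ⟨T₂, hT₂, hc₂, hs₂⟩ := K'.MT_mem k hk
  have hTd : Disjoint T₁ T₂ := by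
    rw [disjoint_left]
    intro N h1 h2
    obtain ⟨x, hx⟩ := K.mnf_nonempty hne (hT₁ h1)
    exact disjoint_left.mp hdisj (K.mnf_subset_verts (hT₁ h1) hx)
      (K'.mnf_subset_verts (hT₂ h2) hx)
  have hsupd : Disjoint (T₁.sup id) (T₂.sup id) := by
    refine hdisj.mono ?_ ?_
    · exact Finset.sup_le fun N hN => K.mnf_subset_verts (hT₁ hN)
    · exact Finset.sup_le fun N hN => K'.mnf_subset_verts (hT₂ hN)
  have hmem : K.MT j + K'.MT k ∈
      {n | ∃ T ⊆ J.minNonFaces, T.card = j + k ∧ (T.sup id).card = n} := by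
    refine ⟨T₁ ∪ T₂, ?_, ?_, ?_⟩
    · exact union_subset (hT₁.trans (join_mnf_left K K' J hdisj hV hF hne'))
        (hT₂.trans (join_mnf_right K K' J hdisj hV hF hne))
    · rw [card_union_of_disjoint hTd, hc₁, hc₂]
    · rw [Finset.sup_union]
      show ((T₁.sup id) ∪ (T₂.sup id)).card = _
      rw [card_union_of_disjoint hsupd, hs₁, hs₂]
  exact le_csSup (J.MT_bddAbove (j + k)) hmem

end Join

theorem key_num (x y z : ℕ → ℕ) (hx0 : x 0 = 0) (hy0 : y 0 = 0) :
    ∀ n a b : ℕ, a + b = n →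
    (∀ j k, j ≤ a → k ≤ b → 1 ≤ j + k → x j + y k ≤ z (j + k)) →
    (a + b).choose a * ((∏ j ∈ Icc 1 a, x j) * ∏ k ∈ Icc 1 b, y k) ≤
      ∏ m ∈ Icc 1 (a + b), z m := by
  intro n
  induction n with
  | zero => intro a b hab h; simp [Nat.eq_zero_of_add_eq_zero_right hab,
      Nat.eq_zero_of_add_eq_zero_left hab]
  | succ n ih =>
    intro a b hab h
    rcases Nat.eq_zero_or_pos a with ha | ha
    · subst ha
      simp only [Nat.choose_zero_right, zero_add, one_mul]
      simp only [show Icc 1 0 = (∅ : Finset ℕ) by rfl, prod_empty, one_mul]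
      refine prod_le_prod' ?_
      intro k hk
      have hk' := mem_Icc.mp hk
      have := h 0 k (le_refl 0) hk'.2 (by omega)
      simpa [hx0] using this
    rcases Nat.eq_zero_or_pos b with hb | hb
    · subst hb
      simp only [show Icc 1 0 = (∅ : Finset ℕ) by rfl, prod_empty, mul_one, add_zero,
        Nat.choose_self, one_mul]
      refine prod_le_prod' ?_
      intro j hj
      have hj' := mem_Icc.mp hj
      have := h j 0 hj'.2 (le_refl 0) (by omega)
      simpa [hy0] using this
    -- a, b ≥ 1
    obtain ⟨a', rfl⟩ : ∃ a', a = a' + 1 := ⟨a - 1, by omega⟩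
    obtain ⟨b', rfl⟩ : ∃ b', b = b' + 1 := ⟨b - 1, by omega⟩
    have h1 : ∀ j k, j ≤ a' → k ≤ b' + 1 → 1 ≤ j + k → x j + y k ≤ z (j + k) :=
      fun j k hj hk => h j k (by omega) hk
    have h2 : ∀ j k, j ≤ a' + 1 → k ≤ b' → 1 ≤ j + k → x j + y k ≤ z (j + k) :=
      fun j k hj hk => h j k hj (by omega)
    have ih1 := ih a' (b' + 1) (by omega) h1
    have ih2 := ih (a' + 1) b' (by omega) h2
    have ea : ∏ j ∈ Icc 1 (a' + 1), x j = (∏ j ∈ Icc 1 a', x j) * x (a' + 1) :=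
      prod_Icc_succ_top (by omega) _
    have eb : ∏ k ∈ Icc 1 (b' + 1), y k = (∏ k ∈ Icc 1 b', y k) * y (b' + 1) :=
      prod_Icc_succ_top (by omega) _
    have ez : ∏ m ∈ Icc 1 (a' + 1 + (b' + 1)), z m
        = (∏ m ∈ Icc 1 (a' + 1 + b'), z m) * z (a' + 1 + (b' + 1)) := by
      have e : a' + 1 + (b' + 1) = (a' + 1 + b') + 1 := by omega
      rw [e, prod_Icc_succ_top (by omega), ← e]
    have e1 : a' + (b' + 1) = a' + 1 + b' := by omega
    rw [e1] at ih1
    set X := ∏ j ∈ Icc 1 a', x j with hX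
    set Y := ∏ k ∈ Icc 1 b', y k with hY
    set u := x (a' + 1)
    set v := y (b' + 1)
    set P := ∏ m ∈ Icc 1 (a' + 1 + b'), z m with hP
    set c1 := (a' + 1 + b').choose a' with hc1
    set c2 := (a' + 1 + b').choose (a' + 1) with hc2
    have ih1' : c1 * (X * Y * v) ≤ P := by
      calc c1 * (X * Y * v) = c1 * (X * (Y * v)) := by ring
        _ ≤ P := by rw [hc1, hX]; rw [eb] at ih1; convert ih1 using 3
    have ih2' : c2 * (X * Y * u) ≤ P := by
      calc c2 * (X * Y * u) = c2 * ((X * u) * Y) := by ring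
        _ ≤ P := by rw [hc2, hX]; rw [ea] at ih2; exact ih2
    have hzf : u + v ≤ z (a' + 1 + (b' + 1)) :=
      h (a' + 1) (b' + 1) le_rfl le_rfl (by omega)
    have hchoose : (a' + 1 + (b' + 1)).choose (a' + 1) = c1 + c2 := by
      have e : a' + 1 + (b' + 1) = (a' + 1 + b') + 1 := by omega
      rw [e, Nat.choose_succ_succ']
    rw [hchoose, ez, ea, eb]
    have key : (c1 + c2) * (X * u * (Y * v)) ≤ P * z (a' + 1 + (b' + 1)) := by
      rcases le_total (c2 * (X * Y * u)) (c1 * (X * Y * v)) with hc | hc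
      · calc (c1 + c2) * (X * u * (Y * v))
            = c1 * (X * Y * v) * u + c2 * (X * Y * u) * v := by ring
          _ ≤ c1 * (X * Y * v) * u + c1 * (X * Y * v) * v :=
              Nat.add_le_add_left (Nat.mul_le_mul_right _ hc) _
          _ = c1 * (X * Y * v) * (u + v) := by ring
          _ ≤ P * z (a' + 1 + (b' + 1)) := Nat.mul_le_mul ih1' hzf
      · calc (c1 + c2) * (X * u * (Y * v))
            = c1 * (X * Y * v) * u + c2 * (X * Y * u) * v := by ring
          _ ≤ c2 * (X * Y * u) * u + c2 * (X * Y * u) * v := by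
              exact Nat.add_le_add_right (Nat.mul_le_mul_right _ hc) _
          _ = c2 * (X * Y * u) * (u + v) := by ring
          _ ≤ P * z (a' + 1 + (b' + 1)) := Nat.mul_le_mul ih2' hzf
    exact key



open SC in
/-- If `K` and `K'` are simplicial complexes on disjoint vertex sets and both satisfy the
Taylor upper bound, then their join `J = K ⋆ K'` satisfies the Taylor upper bound. -/
theorem taylorUB_join {α : Type*} [DecidableEq α] (K K' J : SC α)
    (hdisj : Disjoint K.verts K'.verts)
    (hV : J.verts = K.verts ∪ K'.verts)
    (hF : J.faces = (K.faces ×ˢ K'.faces).image (fun p => p.1 ∪ p.2))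
    (hK : TaylorUB K) (hK' : TaylorUB K') :
    TaylorUB J := by
  rcases K.faces.eq_empty_or_nonempty with he | hne
  · have hJ : J.faces = ∅ := by rw [hF, he]; simp
    have h0 : J.fCard J.dimP1 = 0 := by simp [fCard, hJ]
    unfold TaylorUB taylorUBval
    rw [h0]
    push_cast
    positivity
  rcases K'.faces.eq_empty_or_nonempty with he' | hne'
  · have hJ : J.faces = ∅ := by rw [hF, he']; simp
    have h0 : J.fCard J.dimP1 = 0 := by simp [fCard, hJ]
    unfold TaylorUB taylorUBval
    rw [h0]
    push_cast
    positivity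
  have hdK := K.dimP1_le_card
  have hdK' := K'.dimP1_le_card
  set a := K.verts.card - K.dimP1 with ha
  set b := K'.verts.card - K'.dimP1 with hb
  have hcardJ : J.verts.card = K.verts.card + K'.verts.card := by
    rw [hV, card_union_of_disjoint hdisj]
  have hdimJ := join_dimP1 K K' J hdisj hF hne hne'
  have haJ : J.verts.card - J.dimP1 = a + b := by omega
  have hfK : 0 < K.fCard K.dimP1 := K.fCard_dimP1_pos hne
  have hfK' : 0 < K'.fCard K'.dimP1 := K'.fCard_dimP1_pos hne'
  unfold TaylorUB taylorUBval at hK hK' ⊢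
  rw [← ha] at hK
  rw [← hb] at hK'
  rw [haJ, join_fCard K K' J hdisj hF hne hne']
  set PK := ∏ i ∈ Icc 1 a, (K.MT i : ℚ) with hPK
  set PK' := ∏ i ∈ Icc 1 b, (K'.MT i : ℚ) with hPK'
  -- MT positivity on [1,a]
  have hMTK : ∀ i ∈ Icc 1 a, K.MT i ≠ 0 := by
    intro i hi hzero
    have hz : PK = 0 := prod_eq_zero hi (by exact_mod_cast hzero)
    rw [hz] at hK
    have : (0:ℚ) < (K.fCard K.dimP1 : ℚ) := by exact_mod_cast hfK
    simp only [zero_div] at hK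
    linarith
  have hMTK' : ∀ i ∈ Icc 1 b, K'.MT i ≠ 0 := by
    intro i hi hzero
    have hz : PK' = 0 := prod_eq_zero hi (by exact_mod_cast hzero)
    rw [hz] at hK'
    have : (0:ℚ) < (K'.fCard K'.dimP1 : ℚ) := by exact_mod_cast hfK'
    simp only [zero_div] at hK'
    linarith
  have hSne : ∀ j, j ≤ a →
      {n | ∃ T ⊆ K.minNonFaces, T.card = j ∧ (T.sup id).card = n}.Nonempty := by
    intro j hj
    rcases Nat.eq_zero_or_pos j with rfl | hj1
    · exact ⟨0, ∅, by simp⟩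
    · exact K.MT_nonempty_of_ne_zero (hMTK j (mem_Icc.mpr ⟨hj1, hj⟩))
  have hSne' : ∀ k, k ≤ b →
      {n | ∃ T ⊆ K'.minNonFaces, T.card = k ∧ (T.sup id).card = n}.Nonempty := by
    intro k hk
    rcases Nat.eq_zero_or_pos k with rfl | hk1
    · exact ⟨0, ∅, by simp⟩
    · exact K'.MT_nonempty_of_ne_zero (hMTK' k (mem_Icc.mpr ⟨hk1, hk⟩))
  have hstep : ∀ j k, j ≤ a → k ≤ b → 1 ≤ j + k → K.MT j + K'.MT k ≤ J.MT (j + k) :=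
    fun j k hj hk _ => join_MT_step K K' J hdisj hV hF hne hne' j k (hSne j hj) (hSne' k hk)
  have hnum := key_num K.MT K'.MT J.MT K.MT_zero K'.MT_zero (a + b) a b rfl hstep
  have hnumQ : ((a + b).choose a : ℚ) *
      ((∏ j ∈ Icc 1 a, (K.MT j : ℚ)) * ∏ k ∈ Icc 1 b, (K'.MT k : ℚ)) ≤
      ∏ m ∈ Icc 1 (a + b), (J.MT m : ℚ) := by exact_mod_cast hnum
  rw [← hPK, ← hPK'] at hnumQ
  -- final arithmetic
  have hfacta : (0:ℚ) < (Nat.factorial a : ℚ) := by exact_mod_cast a.factorial_pos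
  have hfactb : (0:ℚ) < (Nat.factorial b : ℚ) := by exact_mod_cast b.factorial_pos
  have hfactab : (0:ℚ) < (Nat.factorial (a + b) : ℚ) := by exact_mod_cast (a+b).factorial_pos
  rw [le_div_iff₀ hfactab]
  have hK2 : (K.fCard K.dimP1 : ℚ) * (Nat.factorial a : ℚ) ≤ PK := by
    rw [← le_div_iff₀ hfacta]; exact hK
  have hK2' : (K'.fCard K'.dimP1 : ℚ) * (Nat.factorial b : ℚ) ≤ PK' := by
    rw [← le_div_iff₀ hfactb]; exact hK'
  have hfacts : (Nat.factorial (a + b) : ℚ) =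
      ((a + b).choose a : ℚ) * (Nat.factorial a : ℚ) * (Nat.factorial b : ℚ) := by
    have := Nat.choose_mul_factorial_mul_factorial (Nat.le_add_right a b)
    rw [Nat.add_sub_cancel_left] at this
    exact_mod_cast this.symm
  push_cast
  rw [hfacts]
  calc (K.fCard K.dimP1 : ℚ) * (K'.fCard K'.dimP1 : ℚ) *
        (((a + b).choose a : ℚ) * (Nat.factorial a : ℚ) * (Nat.factorial b : ℚ))
      = ((a + b).choose a : ℚ) * (((K.fCard K.dimP1 : ℚ) * (Nat.factorial a : ℚ)) *
        ((K'.fCard K'.dimP1 : ℚ) * (Nat.factorial b : ℚ))) := by ring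
    _ ≤ ((a + b).choose a : ℚ) * (PK * PK') := by
        apply mul_le_mul_of_nonneg_left _ (by positivity)
        apply mul_le_mul hK2 hK2' (by positivity) (le_trans (by positivity) hK2)
    _ ≤ ∏ m ∈ Icc 1 (a + b), (J.MT m : ℚ) := hnumQ
end

section
/- Let K be a simplicial complex of dimension d−1 with n > d vertices such that M̃_{n−d}(K) = n. If for every vertex v of K the induced subcomplex K − v satisfies the Taylor upper bound, then K satisfies the Taylor upper bound. -/
open Finset

namespace SC

variable {α : Type*} [DecidableEq α]

lemma minNonFaces_induced_subset (K : SC α) (W : Finset α) :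
    (K.induced W).minNonFaces ⊆ K.minNonFaces := by
  intro F hF
  simp only [minNonFaces, mem_filter, mem_powerset] at hF
  obtain ⟨h1, h2, h3⟩ := hF
  have h1' : F ⊆ K.verts ∩ W := h1
  have hFW : F ⊆ W := h1'.trans inter_subset_right
  simp only [minNonFaces, mem_filter, mem_powerset]
  refine ⟨h1'.trans inter_subset_left, ?_, ?_⟩
  · intro hmem
    apply h2
    show F ∈ K.faces.filter (fun G => G ⊆ W)
    exact mem_filter.mpr ⟨hmem, hFW⟩
  · intro G hG hne
    have hGf : G ∈ K.faces.filter (fun G => G ⊆ W) := h3 G hG hne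
    exact (mem_filter.mp hGf).1

lemma MT_induced_le (K : SC α) (W : Finset α) (i : ℕ) :
    (K.induced W).MT i ≤ K.MT i := by
  unfold MT
  rcases Set.eq_empty_or_nonempty
      {n | ∃ T ⊆ (K.induced W).minNonFaces, T.card = i ∧ (T.sup id).card = n} with hS | hS
  · rw [hS, csSup_empty]
    exact Nat.zero_le _
  · refine csSup_le_csSup ?_ hS ?_
    · refine ⟨K.verts.card, ?_⟩
      rintro m ⟨T, hT, hc, rfl⟩
      apply card_le_card
      intro x hx
      rw [Finset.mem_sup] at hx
      obtain ⟨F, hF, hxF⟩ := hx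
      have := hT hF
      simp only [minNonFaces, mem_filter, mem_powerset] at this
      exact this.1 hxF
    · rintro m ⟨T, hT, hc, rfl⟩
      exact ⟨T, hT.trans (minNonFaces_induced_subset K W), hc, rfl⟩

lemma fCard_eq_zero_of_lt (L : SC α) {j : ℕ} (hj : L.dimP1 < j) : L.fCard j = 0 := by
  unfold fCard
  rw [card_eq_zero, filter_eq_empty_iff]
  intro F hF hc
  have : F.card ≤ L.dimP1 := Finset.le_sup hF
  omega

lemma fCard_induced_erase (K : SC α) (v : α) (j : ℕ) :
    (K.induced (K.verts.erase v)).fCard j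
      = ((K.faces.filter (fun F => F.card = j)).filter (fun F => v ∉ F)).card := by
  unfold fCard induced
  congr 1
  ext F
  simp only [mem_filter]
  constructor
  · rintro ⟨⟨hf, hsub⟩, hc⟩
    exact ⟨⟨hf, hc⟩, fun hv => (mem_erase.mp (hsub hv)).1 rfl⟩
  · rintro ⟨⟨hf, hc⟩, hv⟩
    exact ⟨⟨hf, fun x hx =>
      mem_erase.mpr ⟨fun hxv => hv (hxv ▸ hx), K.subset_verts F hf hx⟩⟩, hc⟩

end SC

open SC in
/-- If `K` has dimension `d-1`, `n > d` vertices, `M̃_{n-d}(K) = n`, and every vertex-deleted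
induced subcomplex `K - v` satisfies the Taylor upper bound, then so does `K`. -/
theorem taylorUB_of_vertex_deletions {α : Type*} [DecidableEq α] (K : SC α) (d : ℕ)
    (hdim : K.dimP1 = d) (hn : d < K.verts.card)
    (hM : K.MT (K.verts.card - d) = K.verts.card)
    (h : ∀ v ∈ K.verts, TaylorUB (K.induced (K.verts.erase v))) :
    TaylorUB K := by
  classical
  set n := K.verts.card with hn_def
  obtain ⟨e, he⟩ : ∃ e, n - d = e + 1 := ⟨n - d - 1, by omega⟩
  set P : ℚ := ∏ i ∈ Finset.Icc 1 e, (K.MT i : ℚ) with hP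
  have hPnonneg : 0 ≤ P := Finset.prod_nonneg fun i _ => Nat.cast_nonneg _
  have hfacpos : (0 : ℚ) < (Nat.factorial e : ℚ) := by
    exact_mod_cast Nat.factorial_pos e
  -- per-vertex bound
  have key1 : ∀ v ∈ K.verts,
      ((K.induced (K.verts.erase v)).fCard d : ℚ) * (Nat.factorial e : ℚ) ≤ P := by
    intro v hv
    have hverts : (K.induced (K.verts.erase v)).verts = K.verts.erase v := by
      simp only [induced]
      exact inter_eq_right.mpr (erase_subset _ _)
    have hcard : (K.induced (K.verts.erase v)).verts.card = n - 1 := by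
      rw [hverts, card_erase_of_mem hv]
    have hdimle : (K.induced (K.verts.erase v)).dimP1 ≤ d := by
      rw [← hdim]
      exact Finset.sup_mono (filter_subset _ _)
    rcases lt_or_eq_of_le hdimle with hlt | heq
    · rw [fCard_eq_zero_of_lt _ hlt]
      simpa using hPnonneg
    · have hub := h v hv
      unfold TaylorUB taylorUBval at hub
      rw [heq, hcard] at hub
      have he2 : n - 1 - d = e := by omega
      rw [he2] at hub
      have h2 : (∏ i ∈ Finset.Icc 1 e, ((K.induced (K.verts.erase v)).MT i : ℚ)) ≤ P := by
        refine Finset.prod_le_prod (fun i _ => Nat.cast_nonneg _) (fun i _ => ?_)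
        exact_mod_cast MT_induced_le K (K.verts.erase v) i
      calc ((K.induced (K.verts.erase v)).fCard d : ℚ) * (Nat.factorial e : ℚ)
          ≤ ∏ i ∈ Finset.Icc 1 e, ((K.induced (K.verts.erase v)).MT i : ℚ) :=
            (le_div_iff₀ hfacpos).mp hub
        _ ≤ P := h2
  -- double counting
  have hdc : ∑ v ∈ K.verts, (K.induced (K.verts.erase v)).fCard d
      = (n - d) * K.fCard d := by
    calc ∑ v ∈ K.verts, (K.induced (K.verts.erase v)).fCard d
        = ∑ v ∈ K.verts, ∑ F ∈ K.faces.filter (fun F => F.card = d),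
            if v ∉ F then 1 else 0 := by
          refine Finset.sum_congr rfl fun v _ => ?_
          rw [fCard_induced_erase, Finset.card_filter]
      _ = ∑ F ∈ K.faces.filter (fun F => F.card = d), ∑ v ∈ K.verts,
            if v ∉ F then 1 else 0 := Finset.sum_comm
      _ = ∑ F ∈ K.faces.filter (fun F => F.card = d), (n - d) := by
          refine Finset.sum_congr rfl fun F hF => ?_
          simp only [mem_filter] at hF
          rw [← Finset.card_filter, ← Finset.sdiff_eq_filter,
            card_sdiff_of_subset (K.subset_verts F hF.1), hF.2]
      _ = (n - d) * K.fCard d := by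
          rw [Finset.sum_const, smul_eq_mul, mul_comm]
          rfl
  -- assemble
  unfold TaylorUB taylorUBval
  rw [hdim]
  rw [le_div_iff₀ (by exact_mod_cast Nat.factorial_pos (n - d))]
  have hprod : (∏ i ∈ Finset.Icc 1 (n - d), (K.MT i : ℚ)) = P * n := by
    rw [he, Finset.prod_Icc_succ_top (by omega)]
    have : K.MT (e + 1) = n := by rw [← he]; exact hM
    rw [this, hP]
  have hfac : (Nat.factorial (n - d) : ℚ) = ((e : ℚ) + 1) * (Nat.factorial e : ℚ) := by
    rw [he, Nat.factorial_succ]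
    push_cast
    ring
  rw [hprod, hfac]
  have hsum : (∑ v ∈ K.verts, ((K.induced (K.verts.erase v)).fCard d : ℚ))
      * (Nat.factorial e : ℚ) ≤ (n : ℚ) * P := by
    rw [Finset.sum_mul]
    calc ∑ v ∈ K.verts, ((K.induced (K.verts.erase v)).fCard d : ℚ) * (Nat.factorial e : ℚ)
        ≤ ∑ _v ∈ K.verts, P := Finset.sum_le_sum key1
      _ = (n : ℚ) * P := by rw [Finset.sum_const, nsmul_eq_mul]
  have hdcQ : (∑ v ∈ K.verts, ((K.induced (K.verts.erase v)).fCard d : ℚ))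
      = ((e : ℚ) + 1) * (K.fCard d : ℚ) := by
    have := hdc
    rw [he] at this
    exact_mod_cast congrArg (Nat.cast : ℕ → ℚ) this
  calc (K.fCard d : ℚ) * (((e : ℚ) + 1) * (Nat.factorial e : ℚ))
      = (((e : ℚ) + 1) * (K.fCard d : ℚ)) * (Nat.factorial e : ℚ) := by ring
    _ = (∑ v ∈ K.verts, ((K.induced (K.verts.erase v)).fCard d : ℚ))
        * (Nat.factorial e : ℚ) := by rw [hdcQ]
    _ ≤ (n : ℚ) * P := hsum
    _ = P * (n : ℚ) := mul_comm _ _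
end

section
/- Let d ≥ 1 and let Δ be a simplicial complex of dimension at most d−1 (i.e., Δ has no face with more than d vertices) on n' vertices, where n' > 4d. Then the number of minimal non-faces of Δ is at least 3(n')²/(8d). -/
open Finset

lemma SC.mem_minNonFaces_iff {α : Type*} [DecidableEq α] {K : SC α} {G : Finset α} :
    G ∈ K.minNonFaces ↔
      G ⊆ K.verts ∧ G ∉ K.faces ∧ ∀ H ⊆ G, H ≠ G → H ∈ K.faces := by
  simp [SC.minNonFaces, Finset.mem_filter, Finset.mem_powerset]

/-- Key induction lemma: a complex of dimension at most `d-1` on `m` vertices has at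
least `m(m-d)/(2d)` minimal non-faces. -/
lemma SC.key_lemma {α : Type*} [DecidableEq α] (d : ℕ) (hd : 1 ≤ d) :
    ∀ m : ℕ, ∀ Δ : SC α, (∀ F ∈ Δ.faces, F.card ≤ d) → Δ.verts.card = m →
      ((m : ℚ) * ((m : ℚ) - d)) / (2 * d) ≤ (Δ.minNonFaces.card : ℚ) := by
  intro m
  induction m using Nat.strong_induction_on with
  | _ m ih =>
    intro Δ hdim hm
    by_cases hmd : m ≤ d
    · -- trivial case: LHS nonpositive
      have h1 : (m : ℚ) - d ≤ 0 := by
        have : (m : ℚ) ≤ d := by exact_mod_cast hmd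
        linarith
      have h2 : (m : ℚ) * ((m : ℚ) - d) ≤ 0 :=
        mul_nonpos_of_nonneg_of_nonpos (by positivity) h1
      have h3 : ((m : ℚ) * ((m : ℚ) - d)) / (2 * d) ≤ 0 := by
        apply div_nonpos_of_nonpos_of_nonneg h2
        positivity
      exact h3.trans (by positivity)
    · push_neg at hmd  -- d < m
      have hvne : Δ.verts.Nonempty := by
        rw [← Finset.card_pos, hm]; omega
      obtain ⟨v₀, hv₀⟩ := hvne
      have hfne : Δ.faces.Nonempty := ⟨{v₀}, Δ.singleton_mem v₀ hv₀⟩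
      obtain ⟨F, hF, hFmax⟩ := Δ.faces.exists_max_image Finset.card hfne
      have hf1 : 1 ≤ F.card := by
        have := hFmax {v₀} (Δ.singleton_mem v₀ hv₀)
        simpa using this
      have hfd : F.card ≤ d := hdim F hF
      have hFV : F ⊆ Δ.verts := Δ.subset_verts F hF
      set W : Finset α := Δ.verts \ F with hWdef
      have hWcard : W.card = m - F.card := by
        rw [hWdef, card_sdiff_of_subset hFV, hm]
      have hempty : (∅ : Finset α) ∈ Δ.faces := Δ.down_closed F hF ∅ (empty_subset F)
      -- For each vertex outside F, find a minimal non-face inside F ∪ {v} containing v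
      have hstep : ∀ v ∈ W, ∃ N, N ∈ Δ.minNonFaces ∧ N ⊆ F ∪ {v} ∧ v ∈ N ∧ ¬ N ⊆ W := by
        intro v hv
        have hvV : v ∈ Δ.verts := (mem_sdiff.mp hv).1
        have hvF : v ∉ F := (mem_sdiff.mp hv).2
        have hcardFv : (F ∪ {v}).card = F.card + 1 := by
          have huv : F ∪ {v} = insert v F := by ext x; simp [or_comm]
          rw [huv, card_insert_of_notMem hvF]
        have hFvnf : F ∪ {v} ∉ Δ.faces := by
          intro h
          have := hFmax _ h
          omega
        have hPne : ((F ∪ {v}).powerset.filter (fun G => G ∉ Δ.faces)).Nonempty :=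
          ⟨F ∪ {v}, mem_filter.mpr ⟨mem_powerset.mpr (Finset.Subset.refl _), hFvnf⟩⟩
        obtain ⟨N, hNP, hNmin⟩ :=
          ((F ∪ {v}).powerset.filter (fun G => G ∉ Δ.faces)).exists_min_image
            Finset.card hPne
        simp only [mem_filter, mem_powerset] at hNP
        obtain ⟨hNsub, hNnf⟩ := hNP
        have hNminimal : ∀ G ⊆ N, G ≠ N → G ∈ Δ.faces := by
          intro G hGsub hGne
          by_contra hGnf
          have hGP : G ∈ (F ∪ {v}).powerset.filter (fun G => G ∉ Δ.faces) := by
            simp only [mem_filter, mem_powerset]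
            exact ⟨hGsub.trans hNsub, hGnf⟩
          have h1 := hNmin G hGP
          have h2 : G ⊂ N := Finset.ssubset_iff_subset_ne.mpr ⟨hGsub, hGne⟩
          have := card_lt_card h2
          omega
        have hNverts : N ⊆ Δ.verts := by
          refine hNsub.trans ?_
          intro x hx
          rcases mem_union.mp hx with h | h
          · exact hFV h
          · rw [mem_singleton.mp h]; exact hvV
        have hNmem : N ∈ Δ.minNonFaces :=
          SC.mem_minNonFaces_iff.mpr ⟨hNverts, hNnf, hNminimal⟩
        have hvN : v ∈ N := by
          by_contra hvN
          have : N ⊆ F := by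
            intro x hx
            rcases mem_union.mp (hNsub hx) with h | h
            · exact h
            · exact absurd (mem_singleton.mp h ▸ hx) hvN
          exact hNnf (Δ.down_closed F hF N this)
        have hNnW : ¬ N ⊆ W := by
          intro hNW
          have : N ⊆ {v} := by
            intro x hx
            rcases mem_union.mp (hNsub hx) with h | h
            · exact absurd h (mem_sdiff.mp (hNW hx)).2
            · exact h
          rcases subset_singleton_iff.mp this with h | h
          · exact hNnf (h ▸ hempty)
          · exact hNnf (h ▸ Δ.singleton_mem v hvV)
        exact ⟨N, hNmem, hNsub, hvN, hNnW⟩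
      classical
      choose! g hg using hstep
      -- injection from W into minimal non-faces meeting F
      have hinj : W.card ≤ (Δ.minNonFaces.filter (fun N => ¬ N ⊆ W)).card := by
        apply Finset.card_le_card_of_injOn g
        · intro v hv
          simp only [mem_coe, mem_filter]
          exact ⟨(hg v hv).1, (hg v hv).2.2.2⟩
        · intro v hv w hw hvw
          have hv' : v ∈ W := hv
          have hw' : w ∈ W := hw
          have hwgw : w ∈ g w := (hg w hw').2.2.1
          have hwgv : w ∈ g v := hvw ▸ hwgw
          have := (hg v hv').2.1 hwgv
          rcases mem_union.mp this with h | h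
          · exact absurd h (mem_sdiff.mp hw').2
          · exact (mem_singleton.mp h).symm
      -- minimal non-faces of the induced complex on W inject into those avoiding F
      set Δ' := Δ.induced W with hΔ'
      have hfaces' : Δ'.faces = Δ.faces.filter (fun G => G ⊆ W) := rfl
      have hverts' : Δ'.verts = Δ.verts ∩ W := rfl
      have hsub : Δ'.minNonFaces ⊆ Δ.minNonFaces.filter (fun N => N ⊆ W) := by
        intro G hG
        rw [SC.mem_minNonFaces_iff, hverts', hfaces'] at hG
        obtain ⟨hGv, hGnf, hGmin⟩ := hG
        have hGW : G ⊆ W := hGv.trans inter_subset_right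
        have hGverts : G ⊆ Δ.verts := hGv.trans inter_subset_left
        rw [mem_filter, SC.mem_minNonFaces_iff]
        refine ⟨⟨hGverts, ?_, ?_⟩, hGW⟩
        · intro h
          exact hGnf (mem_filter.mpr ⟨h, hGW⟩)
        · intro H hH hHne
          exact (mem_filter.mp (hGmin H hH hHne)).1
      have h2 : Δ'.minNonFaces.card ≤ (Δ.minNonFaces.filter (fun N => N ⊆ W)).card :=
        card_le_card hsub
      have hΔ'dim : ∀ G ∈ Δ'.faces, G.card ≤ d := by
        intro G hG
        rw [hfaces'] at hG
        exact hdim G (mem_filter.mp hG).1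
      have hΔ'verts : Δ'.verts.card = m - F.card := by
        rw [hverts', inter_eq_right.mpr (sdiff_subset), hWcard]
      have IH := ih (m - F.card) (by omega) Δ' hΔ'dim hΔ'verts
      have hsplit :=
        Δ.minNonFaces.card_filter_add_card_filter_not (p := fun N => N ⊆ W)
      have hcast : ((m - F.card : ℕ) : ℚ) = (m : ℚ) - F.card :=
        Nat.cast_sub (by omega)
      have hcards : ((m - F.card : ℕ) : ℚ) + (Δ'.minNonFaces.card : ℚ)
          ≤ (Δ.minNonFaces.card : ℚ) := by
        have h3 : (m - F.card) + Δ'.minNonFaces.card ≤ Δ.minNonFaces.card := by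
          have h4 := hinj
          rw [hWcard] at h4
          omega
        exact_mod_cast h3
      rw [hcast] at IH hcards
      have hdpos : (0 : ℚ) < 2 * d := by positivity
      have hy1 : (1 : ℚ) ≤ F.card := by exact_mod_cast hf1
      have hyd : (F.card : ℚ) ≤ d := by exact_mod_cast hfd
      have hdm : (d : ℚ) < m := by exact_mod_cast hmd
      have hnum : ((m : ℚ) * ((m : ℚ) - d)) / (2 * d)
          ≤ ((m : ℚ) - F.card)
            + (((m : ℚ) - F.card) * (((m : ℚ) - F.card) - d)) / (2 * d) := by
        rw [div_le_iff₀ hdpos]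
        have hkey : ((m : ℚ) - F.card)
              + (((m : ℚ) - F.card) * (((m : ℚ) - F.card) - d)) / (2 * d)
            = (((m : ℚ) - F.card) * (2 * d)
              + ((m : ℚ) - F.card) * (((m : ℚ) - F.card) - d)) / (2 * d) := by
          field_simp
        rw [hkey, div_mul_cancel₀ _ (ne_of_gt hdpos)]
        nlinarith [mul_nonneg (sub_nonneg.mpr hyd)
          (by linarith : (0 : ℚ) ≤ 2 * (m : ℚ) - F.card)]
      calc ((m : ℚ) * ((m : ℚ) - d)) / (2 * d)
          ≤ ((m : ℚ) - F.card)
              + (((m : ℚ) - F.card) * (((m : ℚ) - F.card) - d)) / (2 * d) := hnum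
        _ ≤ ((m : ℚ) - F.card) + (Δ'.minNonFaces.card : ℚ) := by linarith
        _ ≤ (Δ.minNonFaces.card : ℚ) := hcards

open SC in
/-- A simplicial complex of dimension at most `d-1` on `n' > 4d` vertices has at least
`3(n')²/(8d)` minimal non-faces. -/
theorem minNonFaces_card_lower_bound {α : Type*} [DecidableEq α] (Δ : SC α) (d n' : ℕ)
    (hd : 1 ≤ d) (hdim : ∀ F ∈ Δ.faces, F.card ≤ d)
    (hn : Δ.verts.card = n') (h4 : 4 * d < n') :
    (3 * (n' : ℚ) ^ 2) / (8 * d) ≤ (Δ.minNonFaces.card : ℚ) := by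
  have key := SC.key_lemma d hd n' Δ hdim hn
  have h1 : (3 * (n' : ℚ) ^ 2) / (8 * d) ≤ ((n' : ℚ) * ((n' : ℚ) - d)) / (2 * d) := by
    have hdpos : (0 : ℚ) < d := by exact_mod_cast hd
    have h4' : (4 : ℚ) * d < n' := by exact_mod_cast h4
    rw [div_le_div_iff₀ (by positivity) (by positivity)]
    nlinarith [mul_nonneg (le_of_lt hdpos) (by nlinarith : (0:ℚ) ≤ (n':ℚ) * ((n':ℚ) - 4 * d))]
  exact h1.trans key
end
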